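/- Let F = ℤ/2ℤ, X a finite set, and let T be such that End(C) is supported in bidegrees (0,q) with q ≤ 0, with the bidegree-(0,0) part spanned by Id_C (abstracting a pairing tangle). Let C̄ = C⊗R_X⊗Ξ_X be the preferred free resolution (with any R_X-action ρ on C). Then every nonzero R_X-linear chain endomorphism of C̄ of bidegree (0,0) equals the identity. -/

import Mathlib

/-!
STATEMENT 18: Let F = ℤ/2ℤ, X a finite set, and C a bigraded bounded complex
(abstracting the Bar-Natan complex of a pairing tangle) whose graded endomorphism
algebra is supported in bidegrees (0,q) with q ≤ 0 and whose bidegree-(0,0) part is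
spanned by Id_C.  Let C̄ = C⊗R_X⊗Ξ_X be the preferred free resolution (for any
R_X-action ρ on C).  Then every nonzero R_X-linear chain endomorphism of C̄ of
bidegree (0,0) equals the identity.

The bigrading of C̄ is induced from that of C: the variables x ∈ R_X have bidegree
(0,-2) and the ξ_x have bidegree (1,2) (so the monomial ξ^{-n} of Ξ contributes
(-n,-2n) and an R_X-monomial of degree k contributes (0,-2k)).
-/

set_option synthInstance.maxHeartbeats 1000000
set_option maxHeartbeats 1000000
set_option maxHeartbeats 8000000
set_option linter.unusedSectionVars false
set_option linter.unusedVariables false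

noncomputable section
open scoped TensorProduct

abbrev F2 := ZMod 2

abbrev Rgen (X : Type) : Type :=
  MvPolynomial X F2 ⧸
    Ideal.span (Set.range fun x : X => (MvPolynomial.X x : MvPolynomial X F2) ^ 2)

def rgen {X : Type} (x : X) : Rgen X := Ideal.Quotient.mk _ (MvPolynomial.X x)

abbrev XiX (X : Type) : Type := (X →₀ ℕ) →₀ F2

def ximon {X : Type} (n : X →₀ ℕ) : XiX X := Finsupp.single n 1

def xiMul {X : Type} [DecidableEq X] (x : X) : XiX X →ₗ[F2] XiX X :=
  Finsupp.lsum F2 fun n =>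
    if n x = 0 then (0 : F2 →ₗ[F2] XiX X)
    else Finsupp.lsingle (n - Finsupp.single x 1)

/-- The span of the `Ξ_X`-monomials of total degree `n`. -/
def Vn (X : Type) (k : ℕ) : Submodule F2 (XiX X) :=
  Submodule.span F2 {v | ∃ n : X →₀ ℕ, (n.sum fun _ m => m) = k ∧ v = ximon n}

/-- The span of the images in `R_X` of the monomials of total degree `k`. -/
def RXdeg (X : Type) (k : ℕ) : Submodule F2 (Rgen X) :=
  Submodule.span F2
    {y | ∃ m : X →₀ ℕ, (m.sum fun _ v => v) = k ∧
      y = Ideal.Quotient.mk _ (MvPolynomial.monomial m (1 : F2))}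

variable (X : Type) [Fintype X] [DecidableEq X]
variable (C : Type) [AddCommGroup C] [Module F2 C]

abbrev Cbar : Type := (Rgen X ⊗[F2] XiX X) ⊗[F2] C

/-- The differential of the preferred free resolution `C̄` of `(C, d, ρ)`. -/
def delBar (d : C →ₗ[F2] C) (ρ : X → C →ₗ[F2] C) : Cbar X C →ₗ[F2] Cbar X C :=
  TensorProduct.map LinearMap.id d +
    ∑ x : X,
      (TensorProduct.map
          (TensorProduct.map (LinearMap.mulLeft F2 (rgen x)) (xiMul x)) LinearMap.id +
        TensorProduct.map (TensorProduct.map LinearMap.id (xiMul x)) (ρ x))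

/-- The `R_X`-action on `C̄` (multiplication on the middle factor). -/
def midMul (x : X) : Cbar X C →ₗ[F2] Cbar X C :=
  TensorProduct.map
    (TensorProduct.map (LinearMap.mulLeft F2 (rgen x)) LinearMap.id) LinearMap.id

/-- The image in `C̄` of `(R_X-degree-k part) ⊗ (Ξ-degree-n part) ⊗ Cg(a,b)`. -/
def piece (Cg : ℤ × ℤ → Submodule F2 C) (a b : ℤ) (k n : ℕ) :
    Submodule F2 (Cbar X C) :=
  LinearMap.range
    (TensorProduct.map
      (TensorProduct.map (RXdeg X k).subtype (Vn X n).subtype) (Cg (a, b)).subtype)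

/-- The bidegree-(i,j) part of `C̄`: the x's have bidegree (0,-2) and the ξ's (1,2). -/
def CbarDeg (Cg : ℤ × ℤ → Submodule F2 C) (i j : ℤ) : Submodule F2 (Cbar X C) :=
  ⨆ (a : ℤ) (b : ℤ) (k : ℕ) (n : ℕ)
    (_ : i = a - n ∧ j = b - 2 * k - 2 * n), piece X C Cg a b k n

/-! ### Auxiliary lemmas -/

section Aux

variable {X}

lemma two_smul_zero {M : Type*} [AddCommMonoid M] [Module F2 M] (u : M) : u + u = 0 := by
  have h : u + u = (1 + 1 : F2) • u := by rw [add_smul, one_smul]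
  rw [h, show (1 + 1 : F2) = 0 from by decide, zero_smul]

lemma sub_single_inj {n m : X →₀ ℕ} (x : X) (hn : 0 < n x) (hm : 0 < m x)
    (h : n - Finsupp.single x 1 = m - Finsupp.single x 1) : n = m := by
  ext y
  have := DFunLike.congr_fun h y
  simp only [Finsupp.tsub_apply] at this
  by_cases hy : x = y
  · subst hy
    rw [Finsupp.single_eq_same] at this
    omega
  · rw [Finsupp.single_eq_of_ne' hy] at this
    simpa using this

lemma xiMul_ximon (x : X) (n : X →₀ ℕ) :
    xiMul x (ximon n) =
      if n x = 0 then 0 else ximon (n - Finsupp.single x 1) := by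
  simp [xiMul, ximon, Finsupp.lsum_single]
  split <;> simp [Finsupp.lsingle, ximon]

lemma xiMul_apply_coeff (x : X) (u : XiX X) (m : X →₀ ℕ) (hm : 0 < m x) :
    (xiMul x u) (m - Finsupp.single x 1) = u m := by
  rw [xiMul, Finsupp.lsum_apply, Finsupp.sum_apply, Finsupp.sum]
  rw [Finset.sum_eq_single m]
  · simp [Finsupp.lsingle, Nat.ne_zero_of_lt hm]
  · intro n hn hne
    by_cases h0 : n x = 0
    · simp [h0]
    · simp only [if_neg h0, Finsupp.lsingle_apply]
      rw [Finsupp.single_eq_of_ne']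
      intro h
      exact hne (sub_single_inj x (Nat.pos_of_ne_zero h0) hm h)
  · intro h
    simp [Finsupp.notMem_support_iff.mp h]

/-- Total degree of a multi-exponent. -/
def fdeg (n : X →₀ ℕ) : ℕ := n.sum fun _ m => m

lemma fdeg_eq_zero {n : X →₀ ℕ} (h : fdeg n = 0) : n = 0 := by
  have h2 := Finset.sum_eq_zero_iff.mp h
  ext x
  by_cases hx : x ∈ n.support
  · exact h2 x hx
  · simpa using Finsupp.notMem_support_iff.mp hx

lemma fdeg_pos_exists {m : X →₀ ℕ} (h : fdeg m ≠ 0) : ∃ x, 0 < m x := by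
  by_contra hc
  push_neg at hc
  apply h
  have : m = 0 := by ext x; exact Nat.le_zero.mp (hc x)
  simp [fdeg, this]

lemma fdeg_add (a b : X →₀ ℕ) : fdeg (a + b) = fdeg a + fdeg b := by
  classical
  unfold fdeg
  exact Finsupp.sum_add_index' (fun _ => rfl) (fun _ _ _ => rfl)

lemma fdeg_single (x : X) : fdeg (Finsupp.single x 1) = 1 := by
  unfold fdeg
  rw [Finsupp.sum_single_index]
  rfl

lemma fdeg_sub {n : X →₀ ℕ} {x : X} (h : 0 < n x) :
    fdeg (n - Finsupp.single x 1) + 1 = fdeg n := by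
  have hle : Finsupp.single x 1 ≤ n := by
    rw [Finsupp.single_le_iff]
    omega
  have : (n - Finsupp.single x 1) + Finsupp.single x 1 = n := tsub_add_cancel_of_le hle
  calc fdeg (n - Finsupp.single x 1) + 1
      = fdeg (n - Finsupp.single x 1) + fdeg (Finsupp.single x 1) := by rw [fdeg_single]
    _ = fdeg ((n - Finsupp.single x 1) + Finsupp.single x 1) := (fdeg_add _ _).symm
    _ = fdeg n := by rw [this]

lemma Vn_support {k : ℕ} {u : XiX X} (hu : u ∈ Vn X k) :
    ∀ m ∈ u.support, fdeg m = k := by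
  refine Submodule.span_induction ?_ ?_ ?_ ?_ hu
  · rintro v ⟨n, hn, rfl⟩ m hm
    have : m = n := by
      by_contra hne
      simp [ximon, Finsupp.single_eq_of_ne' (Ne.symm hne)] at hm
      exact hne hm
    subst this; exact hn
  · simp
  · intro a b _ _ ha hb m hm
    rcases Finset.mem_union.mp (Finsupp.support_add hm) with h | h
    exacts [ha m h, hb m h]
  · intro c a _ ha m hm
    exact ha m (Finsupp.support_smul hm)

lemma ximon_mem_Vn (n : X →₀ ℕ) : ximon n ∈ Vn X (fdeg n) :=
  Submodule.subset_span ⟨n, rfl, rfl⟩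

lemma xi_kernel {k : ℕ} {u : XiX X} (hu : u ∈ Vn X (k + 1))
    (h : ∀ x, xiMul x u = 0) : u = 0 := by
  ext m
  by_cases hm : m ∈ u.support
  · have hdeg : fdeg m = k + 1 := Vn_support hu m hm
    obtain ⟨x, hx⟩ := fdeg_pos_exists (by omega : fdeg m ≠ 0)
    have := xiMul_apply_coeff x u m hx
    rw [h x] at this
    simpa using this.symm
  · simpa using Finsupp.notMem_support_iff.mp hm

lemma Vn_zero_eq {u : XiX X} (hu : u ∈ Vn X 0) : u = u 0 • ximon 0 := by
  ext m
  by_cases hm : m = 0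
  · subst hm; simp [ximon]
  · have : m ∉ u.support := by
      intro h
      exact hm (fdeg_eq_zero (Vn_support hu m h))
    simp [Finsupp.notMem_support_iff.mp this, ximon, Finsupp.single_eq_of_ne' (Ne.symm hm)]

lemma RXdeg_zero : RXdeg X 0 = Submodule.span F2 {(1 : Rgen X)} := by
  unfold RXdeg
  congr 1
  ext y
  constructor
  · rintro ⟨m, hm, rfl⟩
    have : m = 0 := fdeg_eq_zero hm
    subst this
    simp [MvPolynomial.monomial_zero']
  · rintro rfl
    exact ⟨0, by simp [Finsupp.sum_zero_index], by simp [MvPolynomial.monomial_zero']⟩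

/-! ### Linear functionals on `Rgen X` -/

def rfunAlg (x₀ : X) : Rgen X →ₐ[F2] DualNumber F2 :=
  Ideal.Quotient.liftₐ _
    (MvPolynomial.aeval fun x => if x = x₀ then (DualNumber.eps : DualNumber F2) else 0)
    (by
      intro a ha
      rw [← RingHom.mem_ker]
      revert a ha
      rw [← SetLike.le_def, Ideal.span_le]
      rintro y ⟨x, rfl⟩
      simp only [SetLike.mem_coe, RingHom.mem_ker, map_pow, MvPolynomial.aeval_X]
      split
      · rw [sq, DualNumber.eps_mul_eps]
      · rw [sq, mul_zero])

def rfun (x₀ : X) : Rgen X →ₗ[F2] F2 :=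
  (TrivSqZeroExt.sndHom F2 F2) ∘ₗ (rfunAlg x₀).toLinearMap

lemma rfun_rgen (x₀ x : X) : rfun x₀ (rgen x) = if x = x₀ then 1 else 0 := by
  have h : rfunAlg x₀ (rgen x) = if x = x₀ then (DualNumber.eps : DualNumber F2) else 0 := by
    unfold rfunAlg rgen
    rw [← Ideal.Quotient.mkₐ_eq_mk F2, ← AlgHom.comp_apply, Ideal.Quotient.liftₐ_comp,
      MvPolynomial.aeval_X]
  simp only [rfun, LinearMap.coe_comp, Function.comp_apply, AlgHom.toLinearMap_apply, h]
  split
  · exact DualNumber.snd_eps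
  · simp

/-! ### End(C) analysis -/

lemma end_analysis {C : Type} [AddCommGroup C] [Module F2 C]
    (Cg : ℤ × ℤ → Submodule F2 C) (hint : DirectSum.IsInternal Cg)
    (hEnd0 : ∀ e : C →ₗ[F2] C,
      (∀ a b : ℤ, ∀ c ∈ Cg (a, b), e c ∈ Cg (a, b)) → e = 0 ∨ e = LinearMap.id) :
    (∀ p : ℤ × ℤ, Cg p = ⊥) ∨
    ∃ (p : ℤ × ℤ) (c₀ : C), c₀ ≠ 0 ∧ Cg p = Submodule.span F2 {c₀} ∧
      ∀ q, q ≠ p → Cg q = ⊥ := by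
  by_cases hall : ∀ p, Cg p = ⊥
  · exact Or.inl hall
  push_neg at hall
  obtain ⟨p, hp⟩ := hall
  obtain ⟨c₀, hc₀mem, hc₀⟩ := Submodule.exists_mem_ne_zero_of_ne_bot hp
  right
  have claim1 : ∀ q, q ≠ p → Cg q = ⊥ := by
    intro q hq
    by_contra hqb
    obtain ⟨c₁, hc₁mem, hc₁⟩ := Submodule.exists_mem_ne_zero_of_ne_bot hqb
    set decomp := LinearEquiv.ofBijective (DirectSum.coeLinearMap Cg) hint with hdecomp
    set e : C →ₗ[F2] C :=
      (Cg p).subtype ∘ₗ (DirectSum.component F2 (ℤ × ℤ) (fun q => ↥(Cg q)) p) ∘ₗ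
        decomp.symm.toLinearMap with he
    have heval : ∀ (r : ℤ × ℤ) (c : C), c ∈ Cg r → e c = if r = p then c else 0 := by
      intro r c hc
      simp only [he, LinearMap.coe_comp, Function.comp_apply, LinearEquiv.coe_toLinearMap,
        Submodule.coe_subtype, ← DirectSum.apply_eq_component]
      split
      · next h => subst h; rw [hint.ofBijective_coeLinearMap_of_mem hc]
      · next h => rw [hint.ofBijective_coeLinearMap_of_mem_ne h hc]; rfl
    have hpres : ∀ a b : ℤ, ∀ c ∈ Cg (a, b), e c ∈ Cg (a, b) := by
      intro a b c hc
      rw [heval (a, b) c hc]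
      split
      · exact hc
      · exact Submodule.zero_mem _
    rcases hEnd0 e hpres with h0 | hid
    · have := heval p c₀ hc₀mem
      rw [h0] at this
      simp at this
      exact hc₀ this.symm
    · have := heval q c₁ hc₁mem
      rw [hid] at this
      simp [hq] at this
      exact hc₁ this
  refine ⟨p, c₀, hc₀, ?_, claim1⟩
  have hle : Submodule.span F2 {c₀} ≤ Cg p := by
    rw [Submodule.span_le, Set.singleton_subset_iff]; exact hc₀mem
  refine le_antisymm ?_ hle
  intro w hw
  by_contra hwn
  obtain ⟨W, hWc⟩ := Submodule.exists_isCompl (Submodule.span F2 {c₀})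
  set e : C →ₗ[F2] C :=
    (Submodule.span F2 {c₀}).subtype ∘ₗ Submodule.projectionOnto _ W hWc with he
  have hpres : ∀ a b : ℤ, ∀ c ∈ Cg (a, b), e c ∈ Cg (a, b) := by
    intro a b c hc
    by_cases hab : (a, b) = p
    · subst hab
      exact hle (Submodule.coe_mem _)
    · rw [claim1 _ hab] at hc
      simp only [Submodule.mem_bot] at hc
      subst hc
      simp
  rcases hEnd0 e hpres with h0 | hid
  · have : e c₀ = c₀ := by
      simp [he, Submodule.projectionOnto_apply_left hWc
        ⟨c₀, Submodule.mem_span_singleton_self c₀⟩]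
    rw [h0] at this
    exact hc₀ (by simpa using this.symm)
  · apply hwn
    have : e w = w := by rw [hid]; rfl
    rw [← this]
    exact Submodule.coe_mem _

end Aux

/-! ### Tensor infrastructure over `Cbar` -/

section Tensor

variable {X C}

/-- `w ↦ (1 ⊗ w) ⊗ c₀`. -/
def iota (c₀ : C) : XiX X →ₗ[F2] Cbar X C :=
  ((TensorProduct.mk F2 (Rgen X ⊗[F2] XiX X) C).flip c₀) ∘ₗ
    (TensorProduct.mk F2 (Rgen X) (XiX X) 1)

@[simp] lemma iota_apply (c₀ : C) (w : XiX X) :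
    iota c₀ w = ((1 : Rgen X) ⊗ₜ[F2] w) ⊗ₜ[F2] c₀ := rfl

/-- Multiplication by `r` on the `R_X`-factor of `Cbar`. -/
def mulR (r : Rgen X) : Cbar X C →ₗ[F2] Cbar X C :=
  TensorProduct.map
    (TensorProduct.map (LinearMap.mulLeft F2 r) LinearMap.id) LinearMap.id

@[simp] lemma mulR_tmul (r s : Rgen X) (u : XiX X) (c : C) :
    mulR r ((s ⊗ₜ[F2] u) ⊗ₜ[F2] c) = ((r * s) ⊗ₜ[F2] u) ⊗ₜ[F2] c := rfl

lemma mulR_rgen (x : X) : (mulR (rgen x) : Cbar X C →ₗ[F2] Cbar X C) = midMul X C x := rfl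

lemma mulR_one : (mulR 1 : Cbar X C →ₗ[F2] Cbar X C) = LinearMap.id := by
  unfold mulR
  rw [LinearMap.mulLeft_one, TensorProduct.map_id, TensorProduct.map_id]

lemma mulR_mul (r s : Rgen X) :
    (mulR (r * s) : Cbar X C →ₗ[F2] Cbar X C) = (mulR r).comp (mulR s) := by
  apply TensorProduct.ext_threefold
  intro r' u c
  simp [mulR, mul_assoc]

lemma mulR_add (r s : Rgen X) :
    (mulR (r + s) : Cbar X C →ₗ[F2] Cbar X C) = mulR r + mulR s := by
  apply TensorProduct.ext_threefold
  intro a u cc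
  simp [mulR, add_mul, TensorProduct.add_tmul]

lemma mulR_smul (a : F2) (r : Rgen X) :
    (mulR (a • r) : Cbar X C →ₗ[F2] Cbar X C) = a • mulR r := by
  apply TensorProduct.ext_threefold
  intro b u cc
  simp [mulR, smul_mul_assoc, TensorProduct.smul_tmul']

lemma comp_smul_id {M : Type*} [AddCommMonoid M] [Module F2 M] (f : M →ₗ[F2] M) (a : F2) :
    f.comp (a • LinearMap.id) = (a • LinearMap.id).comp f := by
  ext v
  simp

/-- Contraction functional `Cbar → Ξ` built from functionals on `R` and `C`. -/
def epsMap (g : Rgen X →ₗ[F2] F2) (μ : C →ₗ[F2] F2) : Cbar X C →ₗ[F2] XiX X :=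
  (TensorProduct.lid F2 (XiX X)).toLinearMap ∘ₗ
    (TensorProduct.rid F2 (F2 ⊗[F2] XiX X)).toLinearMap ∘ₗ
    TensorProduct.map (TensorProduct.map g LinearMap.id) μ

lemma epsMap_tmul (g : Rgen X →ₗ[F2] F2) (μ : C →ₗ[F2] F2) (r : Rgen X) (u : XiX X) (c : C) :
    epsMap g μ ((r ⊗ₜ[F2] u) ⊗ₜ[F2] c) = (g r * μ c) • u := by
  simp only [epsMap, LinearMap.coe_comp, Function.comp_apply, LinearEquiv.coe_toLinearMap,
    TensorProduct.map_tmul, LinearMap.id_coe, id_eq, TensorProduct.rid_tmul, map_smul,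
    TensorProduct.lid_tmul, smul_smul]
  rw [mul_comm]

end Tensor

/-! ### The main theorem -/

theorem stmt18
    (d : C →ₗ[F2] C) (hd2 : d.comp d = 0)
    (Cg : ℤ × ℤ → Submodule F2 C)
    (hint : DirectSum.IsInternal Cg)
    (hbdd : ∃ N : ℤ, ∀ a b : ℤ, N < a → Cg (a, b) = ⊥)
    -- the differential has bidegree (1,0)
    (hddeg : ∀ a b : ℤ, ∀ c ∈ Cg (a, b), d c ∈ Cg (a + 1, b))
    -- any R_X-action ρ on C by commuting square-zero chain operators of bidegree (0,-2)
    (ρ : X → C →ₗ[F2] C)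
    (hsq : ∀ x, (ρ x).comp (ρ x) = 0)
    (hcomm : ∀ x y, (ρ x).comp (ρ y) = (ρ y).comp (ρ x))
    (hchain : ∀ x, (ρ x).comp d = d.comp (ρ x))
    (hρdeg : ∀ x, ∀ a b : ℤ, ∀ c ∈ Cg (a, b), ρ x c ∈ Cg (a, b - 2))
    -- End(C) is supported in bidegrees (0,q), q ≤ 0, with (0,0)-part spanned by Id:
    (hEnd0 : ∀ e : C →ₗ[F2] C,
      (∀ a b : ℤ, ∀ c ∈ Cg (a, b), e c ∈ Cg (a, b)) → e = 0 ∨ e = LinearMap.id)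
    (hEndq : ∀ (e : C →ₗ[F2] C) (t : ℤ), 0 < t →
      (∀ a b : ℤ, ∀ c ∈ Cg (a, b), e c ∈ Cg (a, b + t)) → e = 0) :
    -- every nonzero R_X-linear chain endomorphism of C̄ of bidegree (0,0) is the identity
    ∀ φ : Cbar X C →ₗ[F2] Cbar X C,
      (∀ x : X, φ.comp (midMul X C x) = (midMul X C x).comp φ) →
      φ.comp (delBar X C d ρ) = (delBar X C d ρ).comp φ →
      (∀ i j : ℤ, ∀ v ∈ CbarDeg X C Cg i j, φ v ∈ CbarDeg X C Cg i j) →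
      φ ≠ 0 → φ = LinearMap.id := by
  intro φ hRlin hchainφ hdeg hne
  rcases end_analysis Cg hint hEnd0 with hall | ⟨p, c₀, hc₀, hspan, hbot⟩
  · -- C is trivial, Cbar is trivial, φ = id vacuously
    have hC0 : ∀ c : C, c = 0 := by
      intro c
      have hmem : c ∈ (⊤ : Submodule F2 C) := Submodule.mem_top
      rw [← hint.submodule_iSup_eq_top] at hmem
      have : (⨆ p, Cg p : Submodule F2 C) = ⊥ := by
        simp [hall]
      rw [this] at hmem
      simpa using hmem
    have hM0 : ∀ v : Cbar X C, v = 0 := by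
      intro v
      induction v using TensorProduct.induction_on with
      | zero => rfl
      | tmul z c => rw [hC0 c, TensorProduct.tmul_zero]
      | add a b ha hb => rw [ha, hb, add_zero]
    exact LinearMap.ext fun v => by rw [hM0 v, map_zero]; rfl
  · obtain ⟨a₀, b₀⟩ := p
    have hc₀mem : c₀ ∈ Cg (a₀, b₀) := by
      rw [hspan]; exact Submodule.mem_span_singleton_self c₀
    have htop : ∀ cc : C, ∃ γ : F2, cc = γ • c₀ := by
      intro cc
      have hmem : cc ∈ (⊤ : Submodule F2 C) := Submodule.mem_top
      rw [← hint.submodule_iSup_eq_top] at hmem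
      have hsup : (⨆ q, Cg q : Submodule F2 C) ≤ Submodule.span F2 {c₀} := by
        apply iSup_le
        intro q
        by_cases hq : q = (a₀, b₀)
        · rw [hq, hspan]
        · rw [hbot q hq]; exact bot_le
      obtain ⟨γ, hγ⟩ := Submodule.mem_span_singleton.mp (hsup hmem)
      exact ⟨γ, hγ.symm⟩
    have hd0 : d = 0 := by
      apply LinearMap.ext
      intro cc
      obtain ⟨γ, rfl⟩ := htop cc
      have hz : d c₀ = 0 := by
        have h1 := hddeg a₀ b₀ c₀ hc₀mem
        rw [hbot (a₀ + 1, b₀) (by simp [Prod.ext_iff])] at h1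
        simpa using h1
      simp [hz]
    have hρ0 : ∀ x, ρ x = 0 := by
      intro x
      apply LinearMap.ext
      intro cc
      obtain ⟨γ, rfl⟩ := htop cc
      have hz : ρ x c₀ = 0 := by
        have h1 := hρdeg x a₀ b₀ c₀ hc₀mem
        rw [hbot (a₀, b₀ - 2) (by simp [Prod.ext_iff])] at h1
        simpa using h1
      simp [hz]
    -- a functional on C sending c₀ to 1
    obtain ⟨μ, hμ⟩ : ∃ μ : C →ₗ[F2] F2, μ c₀ = 1 := by
      have hbij : Function.Bijective (LinearMap.toSpanSingleton F2 C c₀) := by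
        constructor
        · intro a b hab
          simp only [LinearMap.toSpanSingleton_apply] at hab
          have : (a - b) • c₀ = 0 := by rw [sub_smul, hab, sub_self]
          rcases smul_eq_zero.mp this with h | h
          · exact sub_eq_zero.mp h
          · exact absurd h hc₀
        · intro cc
          obtain ⟨γ, rfl⟩ := htop cc
          exact ⟨γ, rfl⟩
      set eqv := LinearEquiv.ofBijective _ hbij with heqv
      refine ⟨eqv.symm.toLinearMap, ?_⟩
      have h1 : eqv 1 = c₀ := by
        simp [heqv, LinearEquiv.ofBijective_apply, LinearMap.toSpanSingleton_apply]
      simp only [LinearEquiv.coe_toLinearMap]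
      rw [← h1, LinearEquiv.symm_apply_apply]
    -- the differential simplifies
    have hdel : delBar X C d ρ = ∑ x : X,
        TensorProduct.map
          (TensorProduct.map (LinearMap.mulLeft F2 (rgen x)) (xiMul x)) LinearMap.id := by
      unfold delBar
      rw [hd0, TensorProduct.map_zero_right, zero_add]
      apply Finset.sum_congr rfl
      intro x _
      rw [hρ0 x, TensorProduct.map_zero_right, add_zero]
    have hdel_iota : ∀ u : XiX X,
        delBar X C d ρ (iota c₀ u) = ∑ x : X, midMul X C x (iota c₀ (xiMul x u)) := by
      intro u
      rw [hdel, LinearMap.sum_apply]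
      apply Finset.sum_congr rfl
      intro x _
      simp [iota_apply, midMul]
    -- pieces with trivial Cg-part vanish
    have hpiece_bot : ∀ (a b : ℤ) (k n : ℕ), Cg (a, b) = ⊥ → piece X C Cg a b k n = ⊥ := by
      intro a b k n h
      have hsub : (Cg (a, b)).subtype = (0 : _ →ₗ[F2] C) := by
        apply LinearMap.ext
        rintro ⟨cc, hcc⟩
        rw [h] at hcc
        simpa using hcc
      unfold piece
      rw [hsub, TensorProduct.map_zero_right, LinearMap.range_zero]
    have hiota_mem : ∀ n : X →₀ ℕ, iota c₀ (ximon n) ∈ piece X C Cg a₀ b₀ 0 (fdeg n) := by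
      intro n
      refine ⟨(⟨1, ?_⟩ ⊗ₜ[F2] ⟨ximon n, ximon_mem_Vn n⟩) ⊗ₜ[F2] ⟨c₀, hc₀mem⟩, rfl⟩
      rw [RXdeg_zero]
      exact Submodule.mem_span_singleton_self 1
    have hpiece_le : ∀ n : X →₀ ℕ,
        piece X C Cg a₀ b₀ 0 (fdeg n) ≤
          CbarDeg X C Cg (a₀ - fdeg n) (b₀ - 2 * fdeg n) := by
      intro n
      unfold CbarDeg
      refine le_iSup_of_le a₀ (le_iSup_of_le b₀ (le_iSup_of_le 0 (le_iSup_of_le (fdeg n)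
        (le_iSup_of_le ⟨rfl, by push_cast; ring⟩ le_rfl))))
    have hCbarDeg_le : ∀ n₀ : ℕ,
        CbarDeg X C Cg (a₀ - n₀) (b₀ - 2 * n₀) ≤
          Submodule.map (iota c₀ : XiX X →ₗ[F2] Cbar X C) (Vn X n₀) := by
      intro n₀
      unfold CbarDeg
      refine iSup_le fun a => iSup_le fun b => iSup_le fun k => iSup_le fun n =>
        iSup_le fun hconstr => ?_
      obtain ⟨hi, hj⟩ := hconstr
      by_cases hab : (a, b) = (a₀, b₀)
      · injection hab with ha hb
        subst ha
        subst hb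
        have hn : n = n₀ := by omega
        have hk : k = 0 := by omega
        subst hn
        subst hk
        intro z hz
        obtain ⟨y, rfl⟩ := hz
        induction y using TensorProduct.induction_on with
        | zero => simp
        | add s t hs ht =>
          rw [map_add]
          exact Submodule.add_mem _ hs ht
        | tmul t cc =>
          induction t using TensorProduct.induction_on with
          | zero =>
            rw [TensorProduct.zero_tmul, map_zero]
            exact Submodule.zero_mem _
          | add s t hs ht =>
            rw [TensorProduct.add_tmul, map_add]
            exact Submodule.add_mem _ hs ht
          | tmul r v =>
            have hr1 : (r : Rgen X) ∈ Submodule.span F2 {(1 : Rgen X)} := by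
              rw [← RXdeg_zero]; exact r.2
            obtain ⟨α, hα⟩ := Submodule.mem_span_singleton.mp hr1
            have hcc1 : (cc : C) ∈ Submodule.span F2 {c₀} := by
              rw [← hspan]; exact cc.2
            obtain ⟨γ, hγ⟩ := Submodule.mem_span_singleton.mp hcc1
            refine ⟨(α * γ) • (v : XiX X), Submodule.smul_mem _ _ v.2, ?_⟩
            simp only [TensorProduct.map_tmul, Submodule.coe_subtype, map_smul, iota_apply]
            rw [← hα, ← hγ]
            rw [TensorProduct.smul_tmul', TensorProduct.smul_tmul', TensorProduct.tmul_smul]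
            rw [TensorProduct.smul_tmul', TensorProduct.smul_tmul', smul_smul, mul_comm γ α]

      · rw [hpiece_bot a b k n (hbot _ hab)]
        exact bot_le
    -- Key A: φ maps iota-monomials to iota-elements of the same Ξ-degree
    have hKeyA : ∀ n : X →₀ ℕ, ∃ w ∈ Vn X (fdeg n), φ (iota c₀ (ximon n)) = iota c₀ w := by
      intro n
      have h1 := hdeg (a₀ - fdeg n) (b₀ - 2 * fdeg n) _ (hpiece_le n (hiota_mem n))
      obtain ⟨w, hw, heq⟩ := Submodule.mem_map.mp (hCbarDeg_le (fdeg n) h1)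
      exact ⟨w, hw, heq.symm⟩
    choose w hwVn hwφ using hKeyA
    -- epsMap evaluation
    have hεmid : ∀ (x₀ x : X) (u : XiX X),
        epsMap (rfun x₀) μ (midMul X C x (iota c₀ u)) = if x = x₀ then u else 0 := by
      intro x₀ x u
      have h1 : midMul X C x (iota c₀ u) = ((rgen x * 1) ⊗ₜ[F2] u) ⊗ₜ[F2] c₀ := rfl
      rw [h1, epsMap_tmul, mul_one, rfun_rgen, hμ, mul_one]
      split <;> simp
    -- Key B: transfer relation
    have hKeyB : ∀ (n : X →₀ ℕ) (x₀ : X),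
        xiMul x₀ (w n) = if n x₀ = 0 then 0 else w (n - Finsupp.single x₀ 1) := by
      intro n x₀
      have hchainpt := LinearMap.congr_fun hchainφ (iota c₀ (ximon n))
      rw [LinearMap.comp_apply, LinearMap.comp_apply] at hchainpt
      rw [hdel_iota, map_sum, hwφ n, hdel_iota] at hchainpt
      have hL : ∀ x : X, φ (midMul X C x (iota c₀ (xiMul x (ximon n)))) =
          midMul X C x (iota c₀ (if n x = 0 then 0 else w (n - Finsupp.single x 1))) := by
        intro x
        rw [← LinearMap.comp_apply, hRlin x, LinearMap.comp_apply]
        congr 1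
        rw [xiMul_ximon]
        split
        · simp
        · exact hwφ _
      rw [Finset.sum_congr rfl (fun x _ => hL x)] at hchainpt
      have happ := congrArg (epsMap (rfun x₀) μ) hchainpt
      rw [map_sum, map_sum] at happ
      simp only [hεmid] at happ
      rw [Finset.sum_ite_eq' Finset.univ x₀, Finset.sum_ite_eq' Finset.univ x₀] at happ
      simpa using happ.symm
    -- Key C: rigidity
    obtain ⟨c, hw0⟩ : ∃ c : F2, w 0 = c • ximon 0 := by
      refine ⟨(w 0) 0, ?_⟩
      have h1 := hwVn 0
      rw [show fdeg (0 : X →₀ ℕ) = 0 from by simp [fdeg]] at h1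
      exact Vn_zero_eq h1
    have hKeyC : ∀ (k : ℕ) (n : X →₀ ℕ), fdeg n = k → w n = c • ximon n := by
      intro k
      induction k with
      | zero =>
        intro n hn
        have h0 : n = 0 := fdeg_eq_zero hn
        rw [h0]
        exact hw0
      | succ k ih =>
        intro n hn
        have hmem : w n + c • ximon n ∈ Vn X (k + 1) := by
          rw [← hn]
          exact Submodule.add_mem _ (hwVn n) (Submodule.smul_mem _ _ (ximon_mem_Vn n))
        have hker : ∀ x, xiMul x (w n + c • ximon n) = 0 := by
          intro x
          rw [map_add, map_smul, hKeyB n x, xiMul_ximon]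
          by_cases hx : n x = 0
          · simp [hx]
          · rw [if_neg hx, if_neg hx]
            have hd : fdeg (n - Finsupp.single x 1) = k := by
              have := fdeg_sub (n := n) (x := x) (Nat.pos_of_ne_zero hx)
              omega
            rw [ih _ hd]
            exact two_smul_zero _
        have hzero := xi_kernel hmem hker
        calc w n = (w n + c • ximon n) + c • ximon n := by
              rw [add_assoc, two_smul_zero, add_zero]
          _ = c • ximon n := by rw [hzero, zero_add]
    -- φ acts as c on iota-elements
    have hφι : ∀ u : XiX X, φ (iota c₀ u) = c • iota c₀ u := by
      have htopXi : ∀ u : XiX X, u ∈ Submodule.span F2 (Set.range (ximon (X := X))) := by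
        intro u
        have h2 : (u.sum fun m a => a • ximon m) = u := by
          rw [show (fun (m : X →₀ ℕ) (a : F2) => a • ximon m) =
              fun m a => Finsupp.single m a from ?_, Finsupp.sum_single]
          funext m a
          rw [ximon, Finsupp.smul_single, smul_eq_mul, mul_one]
        rw [← h2]
        exact Submodule.sum_mem _ fun m _ =>
          Submodule.smul_mem _ _ (Submodule.subset_span ⟨m, rfl⟩)
      intro u
      refine Submodule.span_induction
        (p := fun v _ => φ (iota c₀ v) = c • iota c₀ v) ?_ ?_ ?_ ?_ (htopXi u)
      · rintro v ⟨m, rfl⟩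
        show φ (iota c₀ (ximon m)) = c • iota c₀ (ximon m)
        rw [hwφ m, hKeyC (fdeg m) m rfl, map_smul]
      · show φ (iota c₀ 0) = c • iota c₀ 0
        rw [map_zero, map_zero, smul_zero]
      · intro s t _ _ hs ht
        show φ (iota c₀ (s + t)) = c • iota c₀ (s + t)
        rw [map_add, map_add, hs, ht, smul_add]
      · intro γ s _ hs
        show φ (iota c₀ (γ • s)) = c • iota c₀ (γ • s)
        rw [map_smul, map_smul, hs, smul_comm γ c]
    -- φ commutes with multiplication by any element of R
    have hmulR : ∀ r : Rgen X, φ.comp (mulR r) = (mulR r).comp φ := by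
      intro r
      obtain ⟨q, rfl⟩ := Ideal.Quotient.mk_surjective r
      induction q using MvPolynomial.induction_on with
      | C a =>
        have h1 : (Ideal.Quotient.mk _ (MvPolynomial.C a) : Rgen X) = a • 1 := by
          have h2 : (Ideal.Quotient.mk _ (MvPolynomial.C a) : Rgen X) =
              algebraMap F2 (Rgen X) a := rfl
          rw [h2, Algebra.algebraMap_eq_smul_one]
        rw [h1, mulR_smul, mulR_one, comp_smul_id]
      | add p q hp hq =>
        rw [map_add, mulR_add, LinearMap.comp_add, LinearMap.add_comp, hp, hq]
      | mul_X p x hp =>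
        rw [map_mul]
        rw [show (Ideal.Quotient.mk _ (MvPolynomial.X x) : Rgen X) = rgen x from rfl]
        rw [mulR_mul, ← LinearMap.comp_assoc, hp, LinearMap.comp_assoc, mulR_rgen,
          hRlin x, ← LinearMap.comp_assoc]
    -- φ = c • id
    have hall2 : ∀ v : Cbar X C, φ v = c • v := by
      intro v
      induction v using TensorProduct.induction_on with
      | zero => rw [map_zero, smul_zero]
      | add s t hs ht => rw [map_add, hs, ht, smul_add]
      | tmul t cc =>
        induction t using TensorProduct.induction_on with
        | zero => rw [TensorProduct.zero_tmul, map_zero, smul_zero]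
        | add s t hs ht =>
          rw [TensorProduct.add_tmul, map_add, hs, ht, smul_add]
        | tmul r u =>
          obtain ⟨γ, rfl⟩ := htop cc
          have h1 : (r ⊗ₜ[F2] u) ⊗ₜ[F2] (γ • c₀) = γ • mulR r (iota c₀ u) := by
            rw [iota_apply, mulR_tmul, mul_one, TensorProduct.tmul_smul]
          rw [h1, map_smul, ← LinearMap.comp_apply, hmulR r, LinearMap.comp_apply,
            hφι u, map_smul, smul_comm γ c]
    have hc01 : c = 0 ∨ c = 1 := by
      have hdec : ∀ z : ZMod 2, z = 0 ∨ z = 1 := by decide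
      exact hdec c
    rcases hc01 with hc' | hc'
    · exfalso
      apply hne
      apply LinearMap.ext
      intro v
      rw [hall2 v, hc', zero_smul]
      rfl
    · apply LinearMap.ext
      intro v
      rw [hall2 v, hc', one_smul]
      rfl
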